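/- Let 0 < α < 1/2 and 2α < γ < 1, and assume the localization estimate: there exist C, c > 0 such that for all N and all x, y ∈ {1,…,N}, 𝖤( Σ_{k ∈ I(α)} |ψ^k_x ψ^k_y| ) ≤ C e^{−c|x−y|/N^{2α}}, where I(α) = (N^{1−α}, N−1] ∩ ℤ. Then there is a constant C(α,γ) (depending also on C and c) such that for all N: 𝖯( ∃ k ∈ I(α), ∃ x, y ∈ {1,…,N} with |x−y| ≥ N^γ, |ψ^k_x| ≥ N^{−1/γ} and |ψ^k_y| ≥ N^{−1/γ} ) ≤ C(α,γ) e^{−N^{(γ−2α)/2}}. -/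

import Mathlib

open Finset Filter MeasureTheory ProbabilityTheory



/-- Eigenmodes of the operator `M⁻¹(−Δ)` with free boundary conditions
(`ψ_0 = ψ_1`, `ψ_{N+1} = ψ_N`), normalized by `⟨ψ^j, Mψ^k⟩ = δ_{jk}`, with `ω_0 = 0` and
`ω_k > 0` for `1 ≤ k ≤ N−1`. -/
def IsEigenSystem (N : ℕ) (m : ℕ → ℝ) (ψ : ℕ → ℕ → ℝ) (W : ℕ → ℝ) : Prop :=
  (∀ k ≤ N - 1, ψ k 0 = ψ k 1 ∧ ψ k (N + 1) = ψ k N) ∧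
  (∀ k ≤ N - 1, ∀ x : ℕ, 1 ≤ x → x ≤ N →
    -(ψ k (x + 1) - 2 * ψ k x + ψ k (x - 1)) = (W k) ^ 2 * (m x * ψ k x)) ∧
  (∀ j ≤ N - 1, ∀ k ≤ N - 1,
    (∑ x ∈ Finset.Icc 1 N, m x * ψ j x * ψ k x) = if j = k then 1 else 0) ∧
  W 0 = 0 ∧ (∀ k : ℕ, 1 ≤ k → k ≤ N - 1 → 0 < W k)


noncomputable def uSeq (a : ℕ → ℝ) (l : ℝ) : ℕ → ℝ
  | 0 => 1
  | 1 => 1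
  | (x+2) => 2 * uSeq a l (x+1) - uSeq a l x - l * a (x+1) * uSeq a l (x+1)

lemma uSeq_continuous (a : ℕ → ℝ) (n : ℕ) : Continuous fun l => uSeq a l n := by
  induction n using Nat.strong_induction_on with
  | _ n ih =>
    match n with
    | 0 => simpa [uSeq] using continuous_const
    | 1 => simpa [uSeq] using continuous_const
    | (x+2) =>
      have h1 := ih (x+1) (by omega)
      have h0 := ih x (by omega)
      simp only [uSeq]
      exact ((continuous_const.mul h1).sub h0).sub ((continuous_id.mul continuous_const).mul h1)

lemma uSeq_measurable {Ω : Type*} [MeasurableSpace Ω] (m : ℕ → Ω → ℝ)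
    (hm : ∀ i, Measurable (m i)) (L : Ω → ℝ) (hL : Measurable L) (n : ℕ) :
    Measurable fun ω => uSeq (fun x => m x ω) (L ω) n := by
  induction n using Nat.strong_induction_on with
  | _ n ih =>
    match n with
    | 0 => simpa [uSeq] using measurable_const
    | 1 => simpa [uSeq] using measurable_const
    | (x+2) =>
      have h1 := ih (x+1) (by omega)
      have h0 := ih x (by omega)
      simp only [uSeq]
      exact ((measurable_const.mul h1).sub h0).sub ((hL.mul (hm (x+1))).mul h1)

lemma uSeq_pos_incr (a : ℕ → ℝ) (ha : ∀ x, 0 < a x) (l : ℝ) (hl : l < 0) :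
    ∀ n : ℕ, 0 < uSeq a l (n+1) ∧ uSeq a l (n+1) < uSeq a l (n+2) := by
  intro n
  induction n with
  | zero =>
    constructor
    · norm_num [uSeq]
    · have := ha 1
      show (1:ℝ) < uSeq a l 2
      show (1:ℝ) < 2 * uSeq a l 1 - uSeq a l 0 - l * a 1 * uSeq a l 1
      simp only [uSeq]
      nlinarith
  | succ n ih =>
    obtain ⟨h1, h2⟩ := ih
    have hpos : 0 < uSeq a l (n+2) := lt_trans h1 h2
    refine ⟨hpos, ?_⟩
    show uSeq a l (n+2) < uSeq a l (n+3)
    have hr : uSeq a l (n+3) = 2 * uSeq a l (n+2) - uSeq a l (n+1) - l * a (n+2) * uSeq a l (n+2) := rfl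
    have := ha (n+2)
    have hl' : 0 < -l := by linarith
    have hprod : 0 < (-l) * a (n+2) * uSeq a l (n+2) :=
      mul_pos (mul_pos hl' (ha (n+2))) hpos
    nlinarith

lemma uSeq_lt_succ (a : ℕ → ℝ) (ha : ∀ x, 0 < a x) (l : ℝ) (hl : l < 0)
    {n : ℕ} (hn : 1 ≤ n) : uSeq a l n < uSeq a l (n+1) := by
  obtain ⟨k, rfl⟩ := Nat.exists_eq_add_of_le hn
  have h : 1 + k = k + 1 := by omega
  rw [h]
  exact (uSeq_pos_incr a ha l hl k).2

noncomputable def uPoly (a : ℕ → ℝ) : ℕ → Polynomial ℝ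
  | 0 => 1
  | 1 => 1
  | (x+2) => 2 * uPoly a (x+1) - uPoly a x
      - Polynomial.C (a (x+1)) * Polynomial.X * uPoly a (x+1)

lemma uPoly_eval (a : ℕ → ℝ) (l : ℝ) (n : ℕ) : (uPoly a n).eval l = uSeq a l n := by
  induction n using Nat.strong_induction_on with
  | _ n ih =>
    match n with
    | 0 => simp [uPoly, uSeq]
    | 1 => simp [uPoly, uSeq]
    | (x+2) =>
      have h1 := ih (x+1) (by omega)
      have h0 := ih x (by omega)
      simp only [uPoly, uSeq, Polynomial.eval_sub, Polynomial.eval_mul, Polynomial.eval_ofNat,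
        Polynomial.eval_C, Polynomial.eval_X, h1, h0]
      ring

lemma uPoly_natDegree (a : ℕ → ℝ) (n : ℕ) : (uPoly a n).natDegree ≤ n - 1 := by
  induction n using Nat.strong_induction_on with
  | _ n ih =>
    match n with
    | 0 => simp [uPoly]
    | 1 => simp [uPoly]
    | (x+2) =>
      have h1 := ih (x+1) (by omega)
      have h0 := ih x (by omega)
      simp only [uPoly]
      refine le_trans (Polynomial.natDegree_sub_le _ _) ?_
      have hA : (2 * uPoly a (x+1) - uPoly a x).natDegree ≤ x + 1 := by
        refine le_trans (Polynomial.natDegree_sub_le _ _) ?_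
        have : (2 * uPoly a (x+1)).natDegree ≤ x + 1 := by
          refine le_trans (Polynomial.natDegree_mul_le) ?_
          simp only [Polynomial.natDegree_ofNat, zero_add]
          omega
        have hx : (uPoly a x).natDegree ≤ x + 1 := by omega
        omega
      have hB : (Polynomial.C (a (x+1)) * Polynomial.X * uPoly a (x+1)).natDegree ≤ x + 1 := by
        refine le_trans (Polynomial.natDegree_mul_le) ?_
        have : (Polynomial.C (a (x+1)) * Polynomial.X).natDegree ≤ 1 := by
          refine le_trans (Polynomial.natDegree_mul_le) ?_
          simp
        omega
      omega

section Determ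

variable {N : ℕ} {a : ℕ → ℝ} {ψ : ℕ → ℕ → ℝ} {W : ℕ → ℝ}

lemma ES.rep (hES : IsEigenSystem N a ψ W) (hN : 2 ≤ N) {k : ℕ} (hk : k ≤ N - 1) :
    ∀ x ≤ N + 1, ψ k x = ψ k 1 * uSeq a ((W k)^2) x := by
  obtain ⟨hBC, hrec, -, -, -⟩ := hES
  intro x
  induction x using Nat.strong_induction_on with
  | _ x ih =>
    match x with
    | 0 => intro _; rw [(hBC k hk).1]; simp [uSeq]
    | 1 => intro _; simp [uSeq]
    | (x+2) =>
      intro hx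
      have h1 := ih (x+1) (by omega) (by omega)
      have h0 := ih x (by omega) (by omega)
      have hr := hrec k hk (x+1) (by omega) (by omega)
      have hsub : (x+1) - 1 = x := by omega
      rw [hsub] at hr
      have hstep : ψ k (x+2) = 2 * ψ k (x+1) - ψ k x - (W k)^2 * (a (x+1) * ψ k (x+1)) := by
        have : x + 1 + 1 = x + 2 := rfl
        rw [this] at hr
        linarith
      have hu : uSeq a ((W k)^2) (x+2)
          = 2 * uSeq a ((W k)^2) (x+1) - uSeq a ((W k)^2) x
            - (W k)^2 * a (x+1) * uSeq a ((W k)^2) (x+1) := rfl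
      rw [hstep, h1, h0, hu]
      ring

lemma ES.norm (hES : IsEigenSystem N a ψ W) (hN : 2 ≤ N) {k : ℕ} (hk : k ≤ N - 1) :
    (ψ k 1)^2 * (∑ x ∈ Finset.Icc 1 N, a x * (uSeq a ((W k)^2) x)^2) = 1 := by
  have horth := hES.2.2.1 k hk k hk
  rw [if_pos rfl] at horth
  rw [Finset.mul_sum, ← horth]
  refine Finset.sum_congr rfl fun x hx => ?_
  rw [Finset.mem_Icc] at hx
  rw [ES.rep hES hN hk x (by omega)]
  ring

lemma ES.psi1_ne (hES : IsEigenSystem N a ψ W) (hN : 2 ≤ N) {k : ℕ} (hk : k ≤ N - 1) :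
    ψ k 1 ≠ 0 := by
  intro h0
  have := ES.norm hES hN hk
  rw [h0] at this
  norm_num at this

lemma ES.S_pos (hES : IsEigenSystem N a ψ W) (hN : 2 ≤ N) {k : ℕ} (hk : k ≤ N - 1) :
    0 < ∑ x ∈ Finset.Icc 1 N, a x * (uSeq a ((W k)^2) x)^2 := by
  have h := ES.norm hES hN hk
  nlinarith [sq_nonneg (ψ k 1), sq_nonneg (ψ k 1 * 2)]

lemma ES.abs_eq (hES : IsEigenSystem N a ψ W) (hN : 2 ≤ N) {k : ℕ} (hk : k ≤ N - 1)
    {x y : ℕ} (hx : x ≤ N) (hy : y ≤ N) :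
    |ψ k x * ψ k y| = |uSeq a ((W k)^2) x * uSeq a ((W k)^2) y|
      / (∑ z ∈ Finset.Icc 1 N, a z * (uSeq a ((W k)^2) z)^2) := by
  have hnorm := ES.norm hES hN hk
  have hS := ES.S_pos hES hN hk
  rw [ES.rep hES hN hk x (by omega), ES.rep hES hN hk y (by omega)]
  have hprod : (ψ k 1 * uSeq a ((W k)^2) x) * (ψ k 1 * uSeq a ((W k)^2) y)
      = (ψ k 1)^2 * (uSeq a ((W k)^2) x * uSeq a ((W k)^2) y) := by ring
  rw [hprod, abs_mul, abs_of_nonneg (sq_nonneg _), eq_div_iff hS.ne']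
  calc (ψ k 1)^2 * |uSeq a ((W k)^2) x * uSeq a ((W k)^2) y|
        * (∑ z ∈ Finset.Icc 1 N, a z * (uSeq a ((W k)^2) z)^2)
      = ((ψ k 1)^2 * ∑ z ∈ Finset.Icc 1 N, a z * (uSeq a ((W k)^2) z)^2)
        * |uSeq a ((W k)^2) x * uSeq a ((W k)^2) y| := by ring
    _ = _ := by rw [hnorm]; ring

lemma ES.abs_le {mminus : ℝ} (hES : IsEigenSystem N a ψ W) (hN : 2 ≤ N) {k : ℕ} (hk : k ≤ N - 1)
    (hmm : ∀ z, mminus ≤ a z) (hm0 : 0 < mminus)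
    {x y : ℕ} (hx1 : 1 ≤ x) (hx : x ≤ N) (hy1 : 1 ≤ y) (hy : y ≤ N) :
    |ψ k x * ψ k y| ≤ 1 / mminus := by
  have horth := hES.2.2.1 k hk k hk
  rw [if_pos rfl] at horth
  have hsq : ∀ z, 1 ≤ z → z ≤ N → (ψ k z)^2 ≤ 1 / mminus := by
    intro z hz1 hz2
    have hterm : ∀ w ∈ Finset.Icc 1 N, 0 ≤ a w * ψ k w * ψ k w := by
      intro w _
      have := hmm w
      nlinarith [sq_nonneg (ψ k w)]
    have hle : a z * ψ k z * ψ k z ≤ 1 := by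
      rw [← horth]
      exact Finset.single_le_sum hterm (Finset.mem_Icc.2 ⟨hz1, hz2⟩)
    have := hmm z
    rw [le_div_iff₀ hm0]
    nlinarith [sq_nonneg (ψ k z)]
  have h1 := hsq x hx1 hx
  have h2 := hsq y hy1 hy
  refine abs_le_of_sq_le_sq ?_ (by positivity)
  calc (ψ k x * ψ k y)^2 = (ψ k x)^2 * (ψ k y)^2 := by ring
    _ ≤ (1/mminus) * (1/mminus) := by nlinarith [sq_nonneg (ψ k x), sq_nonneg (ψ k y)]
    _ = (1/mminus)^2 := by ring

lemma ES.Qzero (hES : IsEigenSystem N a ψ W) (hN : 2 ≤ N) {k : ℕ} (hk : k ≤ N - 1) :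
    uSeq a ((W k)^2) (N+1) = uSeq a ((W k)^2) N := by
  have h1 := ES.rep hES hN hk (N+1) le_rfl
  have h2 := ES.rep hES hN hk N (by omega)
  have hBC := (hES.1 k hk).2
  exact mul_left_cancel₀ (ES.psi1_ne hES hN hk) (by rw [← h1, ← h2, hBC])

lemma ES.lam_mono (hES : IsEigenSystem N a ψ W)
    (hsort : ∀ j k, j ≤ k → k ≤ N - 1 → W j ≤ W k) {j k : ℕ}
    (hjk : j ≤ k) (hk : k ≤ N - 1) : (W j)^2 ≤ (W k)^2 := by
  have hWnn : 0 ≤ W j := by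
    rcases Nat.eq_zero_or_pos j with h|h
    · rw [h, hES.2.2.2.1]
    · exact le_of_lt (hES.2.2.2.2 j h (le_trans hjk hk))
  have := hsort j k hjk hk
  nlinarith

lemma ES.lam_strict (hES : IsEigenSystem N a ψ W) (hN : 2 ≤ N)
    (hsort : ∀ j k, j ≤ k → k ≤ N - 1 → W j ≤ W k) {j k : ℕ}
    (hjk : j < k) (hk : k ≤ N - 1) : (W j)^2 < (W k)^2 := by
  have hle := ES.lam_mono hES hsort (le_of_lt hjk) hk
  rcases lt_or_eq_of_le hle with h|h
  · exact h
  exfalso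
  have hj : j ≤ N - 1 := by omega
  have horthjk := hES.2.2.1 j hj k hk
  rw [if_neg (by omega : ¬ j = k)] at horthjk
  have hsum : (∑ x ∈ Finset.Icc 1 N, a x * ψ j x * ψ k x)
      = (ψ j 1 * ψ k 1) * ∑ x ∈ Finset.Icc 1 N, a x * (uSeq a ((W k)^2) x)^2 := by
    rw [Finset.mul_sum]
    refine Finset.sum_congr rfl fun x hx => ?_
    rw [Finset.mem_Icc] at hx
    rw [ES.rep hES hN hj x (by omega), ES.rep hES hN hk x (by omega), h]
    ring
  rw [hsum] at horthjk
  exact mul_ne_zero (mul_ne_zero (ES.psi1_ne hES hN hj) (ES.psi1_ne hES hN hk))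
    (ES.S_pos hES hN hk).ne' horthjk

lemma ES.zeros {mminus : ℝ} (hES : IsEigenSystem N a ψ W) (hN : 2 ≤ N)
    (hsort : ∀ j k, j ≤ k → k ≤ N - 1 → W j ≤ W k)
    (hmm : ∀ z, mminus ≤ a z) (hm0 : 0 < mminus)
    (t : ℝ) (ht : uSeq a t (N+1) = uSeq a t N) :
    ∃ k, k ≤ N - 1 ∧ t = (W k)^2 := by
  by_contra hcon
  push_neg at hcon
  set Qp := uPoly a (N+1) - uPoly a N with hQp
  have hQne : Qp ≠ 0 := by
    intro h0
    have heval : Qp.eval (-1) = 0 := by rw [h0]; simp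
    rw [hQp] at heval
    simp only [Polynomial.eval_sub, uPoly_eval] at heval
    have := uSeq_lt_succ a (fun z => lt_of_lt_of_le hm0 (hmm z)) (-1) (by norm_num)
      (show 1 ≤ N by omega)
    linarith
  have hdeg : Qp.natDegree ≤ N := by
    have h1 := Polynomial.natDegree_sub_le (uPoly a (N+1)) (uPoly a N)
    have h2 := uPoly_natDegree a (N+1)
    have h3 := uPoly_natDegree a N
    rw [hQp]
    omega
  set s : Finset ℝ := insert t ((Finset.range N).image (fun k => (W k)^2)) with hs
  have hroot : ∀ r ∈ s, r ∈ Qp.roots.toFinset := by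
    intro r hr
    rw [Multiset.mem_toFinset, Polynomial.mem_roots hQne]
    rw [hs, Finset.mem_insert] at hr
    rcases hr with rfl | hr
    · show Qp.eval r = 0
      simp only [hQp, Polynomial.eval_sub, uPoly_eval, ht, sub_self]
    · obtain ⟨k, hkmem, rfl⟩ := Finset.mem_image.1 hr
      rw [Finset.mem_range] at hkmem
      have hk : k ≤ N - 1 := by omega
      show Qp.eval ((W k)^2) = 0
      simp only [hQp, Polynomial.eval_sub, uPoly_eval, ES.Qzero hES hN hk, sub_self]
  have hinj : Set.InjOn (fun k : ℕ => (W k)^2) ↑(Finset.range N) := by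
    intro j hj k hk heq
    simp only [Finset.coe_range, Set.mem_Iio] at hj hk
    by_contra hne
    rcases Nat.lt_or_ge j k with h|h
    · exact absurd heq (ES.lam_strict hES hN hsort h (by omega)).ne
    · have h' : k < j := by omega
      exact absurd heq.symm (ES.lam_strict hES hN hsort h' (by omega)).ne
  have hnotmem : t ∉ (Finset.range N).image (fun k : ℕ => (W k)^2) := by
    intro hmem
    obtain ⟨k, hkmem, heq⟩ := Finset.mem_image.1 hmem
    rw [Finset.mem_range] at hkmem
    exact hcon k (by omega) heq.symm
  have hcard : s.card = N + 1 := by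
    rw [hs, Finset.card_insert_of_notMem hnotmem, Finset.card_image_of_injOn hinj,
      Finset.card_range]
  have hle1 : s.card ≤ Qp.roots.toFinset.card := Finset.card_le_card hroot
  have hle2 := Multiset.toFinset_card_le Qp.roots
  have hle3 := Polynomial.card_roots' Qp
  omega

end Determ

lemma lam_measurable {Ω : Type*} [MeasurableSpace Ω] (N : ℕ) (hN : 2 ≤ N)
    (m : ℕ → Ω → ℝ) (hm : ∀ i, Measurable (m i))
    (lam : ℕ → Ω → ℝ)
    (hlam0 : ∀ ω, lam 0 ω = 0)
    (hmono : ∀ ω, ∀ j k : ℕ, j ≤ k → k ≤ N - 1 → lam j ω ≤ lam k ω)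
    (hstrict : ∀ ω, ∀ j k : ℕ, j < k → k ≤ N - 1 → lam j ω < lam k ω)
    (hzero : ∀ ω, ∀ k, k ≤ N - 1 →
      uSeq (fun x => m x ω) (lam k ω) (N+1) = uSeq (fun x => m x ω) (lam k ω) N)
    (hall : ∀ ω t, uSeq (fun x => m x ω) t (N+1) = uSeq (fun x => m x ω) t N →
      ∃ k, k ≤ N - 1 ∧ t = lam k ω) :
    ∀ k, k ≤ N - 1 → Measurable (lam k) := by
  intro k
  induction k with
  | zero =>
    intro _
    have h : lam 0 = fun _ => (0:ℝ) := funext hlam0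
    rw [h]; exact measurable_const
  | succ k ih =>
    intro hk1
    have hkle : k ≤ N - 1 := by omega
    have ihk := ih hkle
    set Q : ℝ → Ω → ℝ := fun q ω =>
      uSeq (fun x => m x ω) q (N+1) - uSeq (fun x => m x ω) q N with hQdef
    have hQmeas : ∀ q : ℝ, Measurable (Q q) := fun q =>
      (uSeq_measurable m hm _ measurable_const (N+1)).sub
        (uSeq_measurable m hm _ measurable_const N)
    have hQcont : ∀ ω, Continuous fun q => Q q ω := fun ω =>
      (uSeq_continuous _ (N+1)).sub (uSeq_continuous _ N)
    apply measurable_of_Iic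
    intro t
    have hset : lam (k+1) ⁻¹' (Set.Iic t) = ⋃ j : ℕ, ⋂ i : ℕ, ⋃ q : ℚ,
        {ω | (q:ℝ) ≤ t ∧ lam k ω + 1/(j+1) ≤ (q:ℝ) ∧ |Q (q:ℝ) ω| < 1/(i+1)} := by
      ext ω
      simp only [Set.mem_preimage, Set.mem_Iic, Set.mem_iUnion, Set.mem_iInter, Set.mem_setOf_eq]
      constructor
      · intro hle
        have hlt : lam k ω < lam (k+1) ω := hstrict ω k (k+1) (Nat.lt_succ_self k) hk1
        obtain ⟨j, hj⟩ := exists_nat_one_div_lt (sub_pos.2 hlt)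
        refine ⟨j, fun i => ?_⟩
        have hQ0 : Q (lam (k+1) ω) ω = 0 := sub_eq_zero.2 (hzero ω (k+1) hk1)
        have hcont : ContinuousAt (fun q => Q q ω) (lam (k+1) ω) := (hQcont ω).continuousAt
        rw [Metric.continuousAt_iff] at hcont
        obtain ⟨δ, hδ0, hδ⟩ := hcont (1/(i+1)) (by positivity)
        have hmax : max (lam k ω + 1/(j+1)) (lam (k+1) ω - δ) < lam (k+1) ω :=
          max_lt (by linarith) (by linarith)
        obtain ⟨q, hq1, hq2⟩ := exists_rat_btwn hmax
        have hqa := le_trans (le_max_left _ _) (le_of_lt hq1)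
        have hqb := lt_of_le_of_lt (le_max_right _ _) hq1
        refine ⟨q, by linarith, hqa, ?_⟩
        have hd : dist (q:ℝ) (lam (k+1) ω) < δ := by
          rw [Real.dist_eq, abs_lt]
          constructor <;> linarith
        have h5 := hδ hd
        rwa [Real.dist_eq, hQ0, sub_zero] at h5
      · rintro ⟨j, hj⟩
        choose q hq1 hq2 hq3 using hj
        have hmem : ∀ i, (q i : ℝ) ∈ Set.Icc (lam k ω + 1/(j+1)) t := fun i => ⟨hq2 i, hq1 i⟩
        obtain ⟨z, hz, φ, hφ, hconv⟩ := isCompact_Icc.tendsto_subseq hmem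
        have hQz : Q z ω = 0 := by
          have h1 : Tendsto (fun i => Q (q (φ i) : ℝ) ω) atTop (nhds (Q z ω)) :=
            ((hQcont ω).tendsto z).comp hconv
          have hneg : Tendsto (fun i : ℕ => -(1/((i:ℝ)+1))) atTop (nhds 0) := by
            simpa using (tendsto_one_div_add_atTop_nhds_zero_nat (𝕜 := ℝ)).neg
          have h2 : Tendsto (fun i => Q (q (φ i) : ℝ) ω) atTop (nhds 0) := by
            refine tendsto_of_tendsto_of_tendsto_of_le_of_le hneg
              tendsto_one_div_add_atTop_nhds_zero_nat (fun i => ?_) (fun i => ?_)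
            · have h3 := (abs_lt.1 (hq3 (φ i))).1
              have h4 : 1/((φ i : ℝ)+1) ≤ 1/((i : ℝ)+1) := by
                apply one_div_le_one_div_of_le (by positivity)
                have h6 : i ≤ φ i := hφ.le_apply
                have h7 : (i:ℝ) ≤ (φ i : ℝ) := Nat.cast_le.2 h6
                linarith
              linarith
            · have h3 := (abs_lt.1 (hq3 (φ i))).2
              have h4 : 1/((φ i : ℝ)+1) ≤ 1/((i : ℝ)+1) := by
                apply one_div_le_one_div_of_le (by positivity)
                have h6 : i ≤ φ i := hφ.le_apply
                have h7 : (i:ℝ) ≤ (φ i : ℝ) := Nat.cast_le.2 h6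
                linarith
              linarith
          exact tendsto_nhds_unique h1 h2
        obtain ⟨l, hl, hzeq⟩ := hall ω z (sub_eq_zero.1 hQz)
        have hzk : lam k ω < z := by
          have : (0:ℝ) < 1/((j:ℝ)+1) := by positivity
          linarith [hz.1]
        have hkl : k < l := by
          by_contra hcon
          push_neg at hcon
          have := hmono ω l k hcon hkle
          rw [← hzeq] at this
          linarith
        have : lam (k+1) ω ≤ lam l ω := hmono ω (k+1) l hkl hl
        rw [← hzeq] at this
        linarith [hz.2]
    rw [hset]
    refine MeasurableSet.iUnion fun j => MeasurableSet.iInter fun i =>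
      MeasurableSet.iUnion fun q => ?_
    have heq : {ω | (q:ℝ) ≤ t ∧ lam k ω + 1/(j+1) ≤ (q:ℝ) ∧ |Q (q:ℝ) ω| < 1/(i+1)}
        = {ω | (q:ℝ) ≤ t} ∩ ({ω | lam k ω + 1/(j+1) ≤ (q:ℝ)} ∩ {ω | |Q (q:ℝ) ω| < 1/(i+1)}) := by
      ext ω; simp [Set.mem_inter_iff, and_assoc]
    rw [heq]
    refine (MeasurableSet.const _).inter (MeasurableSet.inter ?_ ?_)
    · exact measurableSet_le (ihk.add measurable_const) measurable_const
    · exact measurableSet_lt (hQmeas _).abs measurable_const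

lemma exists_bound (α γ C c : ℝ) (hC : 0 < C) (hc : 0 < c) (hβ : 0 < γ - 2*α) (hγ0 : 0 < γ) :
    ∃ C' : ℝ, ∀ N : ℕ, 2 ≤ N →
      (N:ℝ)^(2:ℝ) * (C * Real.exp (-c * (N:ℝ)^(γ - 2*α)) * (N:ℝ)^(2/γ))
        ≤ C' * Real.exp (-(N:ℝ)^((γ - 2*α)/2)) := by
  set β := γ - 2*α with hβdef
  set s := (2 + 2/γ)/β with hs
  have hH : Tendsto (fun n : ℕ => ((n:ℝ)^β)^s * Real.exp (-(c/2) * (n:ℝ)^β)) atTop (nhds 0) := by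
    have h1 := tendsto_rpow_mul_exp_neg_mul_atTop_nhds_zero s (c/2) (half_pos hc)
    have h2 : Tendsto (fun n : ℕ => (n:ℝ)^β) atTop atTop :=
      (tendsto_rpow_atTop hβ).comp tendsto_natCast_atTop_atTop
    exact h1.comp h2
  obtain ⟨B, hB⟩ := hH.bddAbove_range
  refine ⟨C * Real.exp (1/(2*c)) * B, ?_⟩
  intro N hN
  have hN0 : (0:ℝ) < (N:ℝ) := Nat.cast_pos.2 (by omega)
  set y := (N:ℝ)^β with hy
  have hy0 : 0 ≤ y := Real.rpow_nonneg hN0.le β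
  have hsqrt : (N:ℝ)^(β/2) = Real.sqrt y := by
    rw [Real.sqrt_eq_rpow, hy, ← Real.rpow_mul hN0.le]
    congr 1; ring
  have hAM : Real.sqrt y ≤ (c/2)*y + 1/(2*c) := by
    have h2 : 0 ≤ c^2*y - 2*c*Real.sqrt y + 1 := by
      nlinarith [sq_nonneg (c * Real.sqrt y - 1), Real.sq_sqrt hy0]
    have h3 : 2*c*Real.sqrt y ≤ c^2*y + 1 := by linarith
    have h4 : Real.sqrt y = (2*c*Real.sqrt y)/(2*c) := by field_simp
    rw [h4, div_le_iff₀ (by positivity : (0:ℝ) < 2*c)]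
    have h5 : ((c/2)*y + 1/(2*c))*(2*c) = c^2*y + 1 := by field_simp
    rw [h5]; exact h3
  have hexp1 : Real.exp ((N:ℝ)^(β/2) - c*y) ≤ Real.exp (1/(2*c)) * Real.exp (-(c/2)*y) := by
    rw [← Real.exp_add]
    apply Real.exp_le_exp.2
    rw [hsqrt]; linarith
  have hpow : (N:ℝ)^(2:ℝ) * (N:ℝ)^(2/γ) = ((N:ℝ)^β)^s := by
    rw [← Real.rpow_add hN0, ← Real.rpow_mul hN0.le]
    have hβne : β ≠ 0 := ne_of_gt hβ
    congr 1
    rw [hs, mul_comm, div_mul_cancel₀ _ hβne]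
  have hE : Real.exp ((N:ℝ)^(β/2) - c*y) * Real.exp (-(N:ℝ)^(β/2)) = Real.exp (-c*y) := by
    rw [← Real.exp_add]; congr 1; ring
  have hBN : ((N:ℝ)^β)^s * Real.exp (-(c/2) * (N:ℝ)^β) ≤ B := hB (Set.mem_range_self N)
  have hstep : C * ((N:ℝ)^(2:ℝ) * (N:ℝ)^(2/γ)) * Real.exp ((N:ℝ)^(β/2) - c*y)
      ≤ C * Real.exp (1/(2*c)) * B := by
    calc C * ((N:ℝ)^(2:ℝ) * (N:ℝ)^(2/γ)) * Real.exp ((N:ℝ)^(β/2) - c*y)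
        ≤ C * ((N:ℝ)^(2:ℝ) * (N:ℝ)^(2/γ)) * (Real.exp (1/(2*c)) * Real.exp (-(c/2)*y)) := by
          apply mul_le_mul_of_nonneg_left hexp1
          have h8 : (0:ℝ) ≤ (N:ℝ)^(2:ℝ) := Real.rpow_nonneg hN0.le _
          have h9 : (0:ℝ) ≤ (N:ℝ)^(2/γ) := Real.rpow_nonneg hN0.le _
          positivity
      _ = C * Real.exp (1/(2*c)) * (((N:ℝ)^β)^s * Real.exp (-(c/2)*y)) := by
          rw [hpow]; ring
      _ ≤ C * Real.exp (1/(2*c)) * B := by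
          apply mul_le_mul_of_nonneg_left hBN
          positivity
  have hfin := mul_le_mul_of_nonneg_right hstep (Real.exp_nonneg (-(N:ℝ)^(β/2)))
  calc (N:ℝ)^(2:ℝ) * (C * Real.exp (-c * y) * (N:ℝ)^(2/γ))
      = C * ((N:ℝ)^(2:ℝ) * (N:ℝ)^(2/γ)) * (Real.exp ((N:ℝ)^(β/2) - c*y) * Real.exp (-(N:ℝ)^(β/2))) := by
        rw [hE]; ring
    _ ≤ C * Real.exp (1/(2*c)) * B * Real.exp (-(N:ℝ)^(β/2)) := by
        rw [← mul_assoc]; exact hfin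

open scoped Classical in
/-- quantitative probability bound for the delocalization event.  Assuming
the localization estimate `𝖤( Σ_{k ∈ I(α)} |ψ^k_x ψ^k_y| ) ≤ C e^{−c|x−y|/N^{2α}}` with
`I(α) = (N^{1−α}, N−1] ∩ ℤ`, the probability that some mode `k ∈ I(α)` is at least
`N^{−1/γ}` at two sites at distance at least `N^γ` is at most `C(α,γ) e^{−N^{(γ−2α)/2}}`. -/
theorem stmt18
    {Ω : Type*} [MeasurableSpace Ω] (μ : Measure Ω) [IsProbabilityMeasure μ]
    (mminus mplus : ℝ) (hm0 : 0 < mminus)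
    (m : ℕ → Ω → ℝ) (hmeas : ∀ i, Measurable (m i))
    (hindep : iIndepFun m μ)
    (hident : ∀ i j, IdentDistrib (m i) (m j) μ μ)
    (hbdd : ∀ i ω, m i ω ∈ Set.Icc mminus mplus)
    -- the (random) eigenmodes, sorted by increasing eigenfrequency
    (ψ : (N : ℕ) → Ω → ℕ → ℕ → ℝ) (W : (N : ℕ) → Ω → ℕ → ℝ)
    (heigen : ∀ N : ℕ, 2 ≤ N → ∀ ω, IsEigenSystem N (fun x => m x ω) (ψ N ω) (W N ω))
    (hsorted : ∀ N : ℕ, 2 ≤ N → ∀ ω, ∀ j k : ℕ, j ≤ k → k ≤ N - 1 → W N ω j ≤ W N ω k)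
    (α γ : ℝ) (hα0 : 0 < α) (hα : α < 1 / 2) (hγ1 : 2 * α < γ) (hγ2 : γ < 1)
    (C c : ℝ) (hC : 0 < C) (hc : 0 < c)
    (hloc : ∀ N : ℕ, 2 ≤ N → ∀ x ∈ Finset.Icc 1 N, ∀ y ∈ Finset.Icc 1 N,
      (∫ ω, (∑ k ∈ (Finset.Icc 1 (N - 1)).filter
          (fun k : ℕ => (N : ℝ) ^ ((1 : ℝ) - α) < (k : ℝ)),
        |ψ N ω k x * ψ N ω k y|) ∂μ)
        ≤ C * Real.exp (-c * |(x : ℝ) - (y : ℝ)| / (N : ℝ) ^ (2 * α))) :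
    ∃ C' : ℝ, ∀ N : ℕ, 2 ≤ N →
      μ {ω | ∃ k ∈ (Finset.Icc 1 (N - 1)).filter
            (fun k : ℕ => (N : ℝ) ^ ((1 : ℝ) - α) < (k : ℝ)),
          ∃ x y : ℕ, 1 ≤ x ∧ x ≤ N ∧ 1 ≤ y ∧ y ≤ N ∧
            (N : ℝ) ^ γ ≤ |(x : ℝ) - (y : ℝ)| ∧
            (N : ℝ) ^ (-(1 : ℝ) / γ) ≤ |ψ N ω k x| ∧
            (N : ℝ) ^ (-(1 : ℝ) / γ) ≤ |ψ N ω k y|}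
        ≤ ENNReal.ofReal (C' * Real.exp (-(N : ℝ) ^ ((γ - 2 * α) / 2))) := by
  have hγ0 : 0 < γ := by linarith
  have hβ : 0 < γ - 2*α := by linarith
  obtain ⟨C', hC'⟩ := exists_bound α γ C c hC hc hβ hγ0
  refine ⟨C', ?_⟩
  intro N hN
  set K := (Finset.Icc 1 (N - 1)).filter
    (fun k : ℕ => (N : ℝ) ^ ((1 : ℝ) - α) < (k : ℝ)) with hK
  have hN0 : (0:ℝ) < (N:ℝ) := Nat.cast_pos.2 (by omega)
  set thr := (N : ℝ) ^ (-(1:ℝ) / γ) with hthr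
  have hthr0 : 0 < thr := Real.rpow_pos_of_pos hN0 _
  set aa := thr ^ 2 with haa
  have haa0 : 0 < aa := by positivity
  set lam : ℕ → Ω → ℝ := fun k ω => (W N ω k) ^ 2 with hlam
  have hES : ∀ ω, IsEigenSystem N (fun x => m x ω) (ψ N ω) (W N ω) := heigen N hN
  have hsort : ∀ ω, ∀ j k : ℕ, j ≤ k → k ≤ N - 1 → W N ω j ≤ W N ω k := hsorted N hN
  have hmm : ∀ ω z, mminus ≤ m z ω := fun ω z => (hbdd z ω).1
  have hlmeas : ∀ k, k ≤ N - 1 → Measurable (lam k) := by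
    apply lam_measurable N hN m hmeas lam
    · intro ω
      show (W N ω 0)^2 = 0
      rw [(hES ω).2.2.2.1]; ring
    · intro ω j k hjk hk; exact ES.lam_mono (hES ω) (hsort ω) hjk hk
    · intro ω j k hjk hk; exact ES.lam_strict (hES ω) hN (hsort ω) hjk hk
    · intro ω k hk; exact ES.Qzero (hES ω) hN hk
    · intro ω t ht
      obtain ⟨k, hk, heq⟩ := ES.zeros (hES ω) hN (hsort ω) (hmm ω) hm0 t ht
      exact ⟨k, hk, heq⟩
  -- measurable representative of the localization sum
  set g : ℕ × ℕ → Ω → ℝ := fun p ω => ∑ k ∈ K,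
    |uSeq (fun x => m x ω) (lam k ω) p.1 * uSeq (fun x => m x ω) (lam k ω) p.2|
      / (∑ z ∈ Finset.Icc 1 N, m z ω * (uSeq (fun x => m x ω) (lam k ω) z) ^ 2) with hg
  have hKsub : ∀ k ∈ K, k ≤ N - 1 := by
    intro k hk
    rw [hK, Finset.mem_filter, Finset.mem_Icc] at hk
    omega
  have hfg : ∀ p : ℕ × ℕ, p.1 ≤ N → p.2 ≤ N → ∀ ω,
      (∑ k ∈ K, |ψ N ω k p.1 * ψ N ω k p.2|) = g p ω := by
    intro p hp1 hp2 ω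
    refine Finset.sum_congr rfl fun k hk => ?_
    exact ES.abs_eq (hES ω) hN (hKsub k hk) hp1 hp2
  have hgmeas : ∀ p : ℕ × ℕ, Measurable (g p) := by
    intro p
    refine Finset.measurable_sum _ fun k hk => Measurable.div ?_ ?_
    · exact ((uSeq_measurable m hmeas _ (hlmeas k (hKsub k hk)) p.1).mul
        (uSeq_measurable m hmeas _ (hlmeas k (hKsub k hk)) p.2)).abs
    · exact Finset.measurable_sum _ fun z _ => (hmeas z).mul
        ((uSeq_measurable m hmeas _ (hlmeas k (hKsub k hk)) z).pow measurable_const)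
  have hfnn : ∀ (p : ℕ × ℕ) ω, (0:ℝ) ≤ ∑ k ∈ K, |ψ N ω k p.1 * ψ N ω k p.2| :=
    fun p ω => Finset.sum_nonneg fun k _ => abs_nonneg _
  have hfbd : ∀ p : ℕ × ℕ, 1 ≤ p.1 → p.1 ≤ N → 1 ≤ p.2 → p.2 ≤ N → ∀ ω,
      (∑ k ∈ K, |ψ N ω k p.1 * ψ N ω k p.2|) ≤ (N:ℝ) * (1/mminus) := by
    intro p h1 h2 h3 h4 ω
    calc (∑ k ∈ K, |ψ N ω k p.1 * ψ N ω k p.2|) ≤ ∑ _k ∈ K, (1/mminus) :=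
        Finset.sum_le_sum fun k hk =>
          ES.abs_le (hES ω) hN (hKsub k hk) (hmm ω) hm0 h1 h2 h3 h4
      _ = (K.card : ℝ) * (1/mminus) := by rw [Finset.sum_const, nsmul_eq_mul]
      _ ≤ (N:ℝ) * (1/mminus) := by
          have h5 : K.card ≤ N := by
            refine le_trans (Finset.card_filter_le _ _) ?_
            rw [Nat.card_Icc]; omega
          exact mul_le_mul_of_nonneg_right (Nat.cast_le.2 h5) (by positivity)
  have hgint : ∀ p : ℕ × ℕ, 1 ≤ p.1 → p.1 ≤ N → 1 ≤ p.2 → p.2 ≤ N → Integrable (g p) μ := by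
    intro p h1 h2 h3 h4
    refine Integrable.mono' (integrable_const ((N:ℝ) * (1/mminus)))
      (hgmeas p).aestronglyMeasurable (ae_of_all _ fun ω => ?_)
    rw [Real.norm_eq_abs, ← hfg p h2 h4 ω, abs_of_nonneg (hfnn p ω)]
    exact hfbd p h1 h2 h3 h4 ω
  set s : Finset (ℕ × ℕ) := (Finset.Icc 1 N ×ˢ Finset.Icc 1 N).filter
    (fun p => (N:ℝ)^γ ≤ |(p.1:ℝ) - (p.2:ℝ)|) with hs
  have hsub : {ω | ∃ k ∈ K,
          ∃ x y : ℕ, 1 ≤ x ∧ x ≤ N ∧ 1 ≤ y ∧ y ≤ N ∧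
            (N : ℝ) ^ γ ≤ |(x : ℝ) - (y : ℝ)| ∧
            thr ≤ |ψ N ω k x| ∧ thr ≤ |ψ N ω k y|}
      ⊆ ⋃ p ∈ s, {ω | aa ≤ g p ω} := by
    intro ω hω
    obtain ⟨k, hk, x, y, hx1, hx2, hy1, hy2, hdist, hax, hay⟩ := hω
    have hps : (x, y) ∈ s := by
      rw [hs, Finset.mem_filter, Finset.mem_product, Finset.mem_Icc, Finset.mem_Icc]
      exact ⟨⟨⟨hx1, hx2⟩, ⟨hy1, hy2⟩⟩, hdist⟩
    refine Set.mem_biUnion hps ?_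
    show aa ≤ g (x, y) ω
    rw [← hfg (x, y) hx2 hy2 ω]
    calc aa = thr * thr := by rw [haa]; ring
      _ ≤ |ψ N ω k x| * |ψ N ω k y| :=
          mul_le_mul hax hay hthr0.le (le_trans hthr0.le hax)
      _ = |ψ N ω k x * ψ N ω k y| := (abs_mul _ _).symm
      _ ≤ ∑ k' ∈ K, |ψ N ω k' x * ψ N ω k' y| :=
          Finset.single_le_sum (f := fun k' => |ψ N ω k' x * ψ N ω k' y|)
            (fun i _ => abs_nonneg _) hk
  set D := C * Real.exp (-c * (N:ℝ)^(γ - 2*α)) * (N:ℝ)^(2/γ) with hD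
  have hD0 : 0 ≤ D := by
    have h9 : (0:ℝ) ≤ (N:ℝ)^(2/γ) := Real.rpow_nonneg hN0.le _
    positivity
  have hper : ∀ p ∈ s, μ {ω | aa ≤ g p ω} ≤ ENNReal.ofReal D := by
    intro p hp
    rw [hs, Finset.mem_filter, Finset.mem_product, Finset.mem_Icc, Finset.mem_Icc] at hp
    obtain ⟨⟨⟨h1, h2⟩, ⟨h3, h4⟩⟩, hdist⟩ := hp
    have hint := hgint p h1 h2 h3 h4
    have hnn : 0 ≤ᵐ[μ] g p := ae_of_all _ fun ω => by
      rw [← hfg p h2 h4 ω]; exact hfnn p ω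
    have hmark := mul_meas_ge_le_integral_of_nonneg hnn hint aa
    have hloc' := hloc N hN p.1 (Finset.mem_Icc.2 ⟨h1, h2⟩) p.2 (Finset.mem_Icc.2 ⟨h3, h4⟩)
    rw [← hK] at hloc'
    have hif : (∫ ω, g p ω ∂μ) = ∫ ω, (∑ k ∈ K, |ψ N ω k p.1 * ψ N ω k p.2|) ∂μ :=
      integral_congr_ae (ae_of_all _ fun ω => (hfg p h2 h4 ω).symm)
    have hintf : (∫ ω, g p ω ∂μ)
        ≤ C * Real.exp (-c * |(p.1:ℝ) - (p.2:ℝ)| / (N:ℝ)^(2*α)) := by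
      rw [hif]; exact hloc'
    have hP : (0:ℝ) < (N:ℝ)^(2*α) := Real.rpow_pos_of_pos hN0 _
    have hEle : -c * |(p.1:ℝ) - (p.2:ℝ)| / (N:ℝ)^(2*α) ≤ -c * (N:ℝ)^(γ - 2*α) := by
      rw [Real.rpow_sub hN0, div_le_iff₀ hP]
      have h6 : -c * ((N:ℝ)^γ / (N:ℝ)^(2*α)) * (N:ℝ)^(2*α) = -c * (N:ℝ)^γ := by
        field_simp
      rw [h6]
      nlinarith [hdist, hc]
    have hCe : (∫ ω, g p ω ∂μ) ≤ C * Real.exp (-c * (N:ℝ)^(γ - 2*α)) :=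
      le_trans hintf (mul_le_mul_of_nonneg_left (Real.exp_le_exp.2 hEle) hC.le)
    have haaN : aa * (N:ℝ)^(2/γ) = 1 := by
      rw [haa, hthr, sq, ← Real.rpow_add hN0, ← Real.rpow_add hN0, ← Real.rpow_zero (N:ℝ)]
      congr 1
      field_simp
      norm_num
    have htR : (μ {ω | aa ≤ g p ω}).toReal ≤ D := by
      have h7 : aa * (μ {ω | aa ≤ g p ω}).toReal ≤ C * Real.exp (-c * (N:ℝ)^(γ - 2*α)) :=
        le_trans hmark hCe
      have h8 : (0:ℝ) ≤ (N:ℝ)^(2/γ) := Real.rpow_nonneg hN0.le _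
      calc (μ {ω | aa ≤ g p ω}).toReal
          = (aa * (μ {ω | aa ≤ g p ω}).toReal) * (N:ℝ)^(2/γ) := by
            have h9 : (aa * (μ {ω | aa ≤ g p ω}).toReal) * (N:ℝ)^(2/γ)
                = (μ {ω | aa ≤ g p ω}).toReal * (aa * (N:ℝ)^(2/γ)) := by ring
            rw [h9, haaN, mul_one]
        _ ≤ (C * Real.exp (-c * (N:ℝ)^(γ - 2*α))) * (N:ℝ)^(2/γ) :=
            mul_le_mul_of_nonneg_right h7 h8
        _ = D := by rw [hD]
    calc μ {ω | aa ≤ g p ω}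
        = ENNReal.ofReal ((μ {ω | aa ≤ g p ω}).toReal) :=
          (ENNReal.ofReal_toReal (measure_ne_top μ _)).symm
      _ ≤ ENNReal.ofReal D := ENNReal.ofReal_le_ofReal htR
  have hcard : s.card ≤ N^2 := by
    calc s.card ≤ (Finset.Icc 1 N ×ˢ Finset.Icc 1 N).card := Finset.card_filter_le _ _
      _ = (Finset.Icc 1 N).card * (Finset.Icc 1 N).card := Finset.card_product _ _
      _ = N * N := by rw [Nat.card_Icc]; simp
      _ = N^2 := (sq N).symm
  calc μ {ω | ∃ k ∈ K,
          ∃ x y : ℕ, 1 ≤ x ∧ x ≤ N ∧ 1 ≤ y ∧ y ≤ N ∧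
            (N : ℝ) ^ γ ≤ |(x : ℝ) - (y : ℝ)| ∧
            thr ≤ |ψ N ω k x| ∧ thr ≤ |ψ N ω k y|}
      ≤ μ (⋃ p ∈ s, {ω | aa ≤ g p ω}) := measure_mono hsub
    _ ≤ ∑ p ∈ s, μ {ω | aa ≤ g p ω} := measure_biUnion_finset_le s _
    _ ≤ ∑ _p ∈ s, ENNReal.ofReal D := Finset.sum_le_sum hper
    _ = (s.card : ENNReal) * ENNReal.ofReal D := by rw [Finset.sum_const, nsmul_eq_mul]
    _ ≤ ((N^2 : ℕ) : ENNReal) * ENNReal.ofReal D := by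
        have h10 : (s.card : ENNReal) ≤ ((N^2 : ℕ) : ENNReal) := by exact_mod_cast hcard
        exact mul_le_mul_left h10 _
    _ = ENNReal.ofReal (((N^2 : ℕ) : ℝ) * D) := by
        rw [ENNReal.ofReal_mul (by positivity : (0:ℝ) ≤ ((N^2:ℕ):ℝ)), ENNReal.ofReal_natCast]
    _ = ENNReal.ofReal ((N:ℝ)^(2:ℝ) * D) := by
        congr 1
        push_cast
        rw [show ((2:ℝ)) = ((2:ℕ):ℝ) by norm_num, Real.rpow_natCast]
    _ ≤ ENNReal.ofReal (C' * Real.exp (-(N : ℝ) ^ ((γ - 2 * α) / 2))) := by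
        apply ENNReal.ofReal_le_ofReal
        rw [hD]
        exact hC' N hN
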